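/- Let a, b > 0 with a ≠ b, and let 0 < τ, t < 1. If t ≤ min{τ, 1-τ} or t ≥ max{τ, 1-τ}, then (a ∇ b - !_τ(a,b)) / (a ∇ b - !_t(a,b)) ≤ (log(a ∇ b) - log(!_τ(a,b))) / (log(a ∇ b) - log(!_t(a,b))). If instead min{τ, 1-τ} ≤ t ≤ max{τ, 1-τ}, the reverse inequality holds. -/

import Mathlib

/-- The weighted harmonic mean of positive reals: `a !_t b = ((1-t)a⁻¹ + t b⁻¹)⁻¹`. -/
noncomputable def wharm (t a b : ℝ) : ℝ := ((1 - t) * a⁻¹ + t * b⁻¹)⁻¹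

/-- The harmonic Heinz mean `!_t(a,b) = (a !_t b + a !_{1-t} b)/2`. -/
noncomputable def heinzHarm (t a b : ℝ) : ℝ := (wharm t a b + wharm (1 - t) a b) / 2

lemma wharm_eq (t a b : ℝ) (ha : 0 < a) (hb : 0 < b) :
    wharm t a b = a * b / ((1 - t) * b + t * a) := by
  have h : (1 - t) * a⁻¹ + t * b⁻¹ = ((1 - t) * b + t * a) / (a * b) := by
    field_simp
  rw [wharm, h, inv_div]

lemma heinz_eq (t a b : ℝ) (ha : 0 < a) (hb : 0 < b) (ht0 : 0 < t) (ht1 : t < 1) :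
    heinzHarm t a b = a * b * (a + b) / (2 * (a * b + t * (1 - t) * (a - b) ^ 2)) := by
  have hd1 : 0 < (1 - t) * b + t * a := by nlinarith
  have hd2 : 0 < (1 - (1 - t)) * b + (1 - t) * a := by nlinarith
  have hd3 : 0 < a * b + t * (1 - t) * (a - b) ^ 2 := by
    nlinarith [mul_nonneg (mul_nonneg ht0.le (by linarith : (0:ℝ) ≤ 1 - t)) (sq_nonneg (a - b)),
      mul_pos ha hb]
  rw [heinzHarm, wharm_eq t a b ha hb, wharm_eq (1 - t) a b ha hb]
  rw [div_add_div _ _ hd1.ne' hd2.ne', div_div]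
  rw [div_eq_div_iff (by positivity) (by positivity)]
  ring

lemma key_log (x y M : ℝ) (hx : 0 < x) (hxy : x ≤ y) (hyM : y < M) :
    (M - x) * (Real.log M - Real.log y) ≤ (M - y) * (Real.log M - Real.log x) := by
  have hy : 0 < y := lt_of_lt_of_le hx hxy
  have hM : 0 < M := hy.trans hyM
  have h1 : Real.log M - Real.log y ≤ (M - y) / y := by
    have h := Real.log_le_sub_one_of_pos (div_pos hM hy)
    rw [Real.log_div hM.ne' hy.ne'] at h
    have e : M / y - 1 = (M - y) / y := by field_simp
    linarith
  have h2 : (y - x) / y ≤ Real.log y - Real.log x := by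
    have h := Real.log_le_sub_one_of_pos (div_pos hx hy)
    rw [Real.log_div hx.ne' hy.ne'] at h
    have e : x / y - 1 = -((y - x) / y) := by field_simp; ring
    linarith
  have hyx : 0 ≤ y - x := by linarith
  have hMy : 0 ≤ M - y := by linarith
  have k1 : (y - x) * (Real.log M - Real.log y) ≤ (y - x) * ((M - y) / y) :=
    mul_le_mul_of_nonneg_left h1 hyx
  have k2 : (M - y) * ((y - x) / y) ≤ (M - y) * (Real.log y - Real.log x) :=
    mul_le_mul_of_nonneg_left h2 hMy
  have e : (y - x) * ((M - y) / y) = (M - y) * ((y - x) / y) := by ring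
  nlinarith [k1, k2, e]

theorem stmt_6 (a b τ t : ℝ) (ha : 0 < a) (hb : 0 < b) (hab : a ≠ b)
    (hτ : τ ∈ Set.Ioo (0 : ℝ) 1) (ht : t ∈ Set.Ioo (0 : ℝ) 1) :
    ((t ≤ min τ (1 - τ) ∨ t ≥ max τ (1 - τ)) →
      ((a + b) / 2 - heinzHarm τ a b) / ((a + b) / 2 - heinzHarm t a b)
        ≤ (Real.log ((a + b) / 2) - Real.log (heinzHarm τ a b))
            / (Real.log ((a + b) / 2) - Real.log (heinzHarm t a b))) ∧
    ((min τ (1 - τ) ≤ t ∧ t ≤ max τ (1 - τ)) →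
      (Real.log ((a + b) / 2) - Real.log (heinzHarm τ a b))
          / (Real.log ((a + b) / 2) - Real.log (heinzHarm t a b))
        ≤ ((a + b) / 2 - heinzHarm τ a b) / ((a + b) / 2 - heinzHarm t a b)) := by
  obtain ⟨hτ0, hτ1⟩ := hτ
  obtain ⟨ht0, ht1⟩ := ht
  have hd : 0 < (a - b) ^ 2 := by
    have : a - b ≠ 0 := sub_ne_zero.mpr hab
    positivity
  have hM : 0 < (a + b) / 2 := by positivity
  have hft := heinz_eq t a b ha hb ht0 ht1
  have hfτ := heinz_eq τ a b ha hb hτ0 hτ1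
  have hst : 0 < t * (1 - t) := by nlinarith
  have hsτ : 0 < τ * (1 - τ) := by nlinarith
  have hden : ∀ s : ℝ, 0 < s → 0 < a * b + s * (a - b) ^ 2 := fun s hs => by
    nlinarith [mul_pos hs hd, mul_pos ha hb]
  have hpt : 0 < heinzHarm t a b := by
    rw [hft]; exact div_pos (by positivity) (by nlinarith [hden _ hst])
  have hpτ : 0 < heinzHarm τ a b := by
    rw [hfτ]; exact div_pos (by positivity) (by nlinarith [hden _ hsτ])
  have hltM : ∀ s : ℝ, 0 < s →
      a * b * (a + b) / (2 * (a * b + s * (a - b) ^ 2)) < (a + b) / 2 := by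
    intro s hs
    rw [div_lt_div_iff₀ (by nlinarith [hden s hs]) (by norm_num)]
    nlinarith [mul_pos (mul_pos (show (0:ℝ) < a + b by linarith) hs) hd]
  have hlt : heinzHarm t a b < (a + b) / 2 := by rw [hft]; exact hltM _ hst
  have hlτ : heinzHarm τ a b < (a + b) / 2 := by rw [hfτ]; exact hltM _ hsτ
  have hmono : ∀ s₁ s₂ : ℝ, 0 < s₁ → s₁ ≤ s₂ →
      a * b * (a + b) / (2 * (a * b + s₂ * (a - b) ^ 2))
        ≤ a * b * (a + b) / (2 * (a * b + s₁ * (a - b) ^ 2)) := by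
    intro s₁ s₂ h1 h12
    apply div_le_div_of_nonneg_left (by positivity) (by nlinarith [hden s₁ h1])
    nlinarith [mul_le_mul_of_nonneg_right h12 hd.le]
  have hlogt : Real.log (heinzHarm t a b) < Real.log ((a + b) / 2) :=
    Real.log_lt_log hpt hlt
  have hlogτ : Real.log (heinzHarm τ a b) < Real.log ((a + b) / 2) :=
    Real.log_lt_log hpτ hlτ
  constructor
  · rintro (h | h)
    · have hs : t * (1 - t) ≤ τ * (1 - τ) := by
        simp only [le_min_iff] at h
        have e : (τ - t) * (1 - τ - t) = τ * (1 - τ) - t * (1 - t) := by ring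
        have := mul_nonneg (by linarith [h.1] : (0:ℝ) ≤ τ - t)
          (by linarith [h.2] : (0:ℝ) ≤ 1 - τ - t)
        linarith
      have hxy : heinzHarm τ a b ≤ heinzHarm t a b := by
        rw [hft, hfτ]; exact hmono _ _ hst hs
      have := key_log (heinzHarm τ a b) (heinzHarm t a b) ((a + b) / 2) hpτ hxy hlt
      rw [div_le_div_iff₀ (by linarith) (by linarith)]
      linarith
    · have hs : t * (1 - t) ≤ τ * (1 - τ) := by
        simp only [ge_iff_le, max_le_iff] at h
        have e : (t - τ) * (t + τ - 1) = τ * (1 - τ) - t * (1 - t) := by ring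
        have := mul_nonneg (by linarith [h.1] : (0:ℝ) ≤ t - τ)
          (by linarith [h.2] : (0:ℝ) ≤ t + τ - 1)
        linarith
      have hxy : heinzHarm τ a b ≤ heinzHarm t a b := by
        rw [hft, hfτ]; exact hmono _ _ hst hs
      have := key_log (heinzHarm τ a b) (heinzHarm t a b) ((a + b) / 2) hpτ hxy hlt
      rw [div_le_div_iff₀ (by linarith) (by linarith)]
      linarith
  · rintro ⟨h1, h2⟩
    have hs : τ * (1 - τ) ≤ t * (1 - t) := by
      simp only [min_le_iff] at h1
      simp only [le_max_iff] at h2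
      rcases h1 with h1 | h1 <;> rcases h2 with h2 | h2
      · have : t = τ := le_antisymm h2 h1
        rw [this]
      · have e : (t - τ) * (1 - t - τ) = t * (1 - t) - τ * (1 - τ) := by ring
        have := mul_nonneg (by linarith : (0:ℝ) ≤ t - τ) (by linarith : (0:ℝ) ≤ 1 - t - τ)
        linarith
      · have e : (τ - t) * (t + τ - 1) = t * (1 - t) - τ * (1 - τ) := by ring
        have := mul_nonneg (by linarith : (0:ℝ) ≤ τ - t) (by linarith : (0:ℝ) ≤ t + τ - 1)
        linarith
      · have e : t = 1 - τ := le_antisymm h2 h1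
        rw [e]; ring_nf; exact le_refl _
    have hxy : heinzHarm t a b ≤ heinzHarm τ a b := by
      rw [hft, hfτ]; exact hmono _ _ hsτ hs
    have := key_log (heinzHarm t a b) (heinzHarm τ a b) ((a + b) / 2) hpt hxy hlτ
    rw [div_le_div_iff₀ (by linarith) (by linarith)]
    linarith
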